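/- If Z₁ and Z₂ are independent random variables each distributed as Gum(b) with b > 0, then the difference Z₁ − Z₂ has the logistic distribution with scale b, i.e., Pr[Z₁ − Z₂ ≤ x] = 1/(1 + e^{−x/b}) for all x ∈ ℝ. -/

import Mathlib

open MeasureTheory Set Filter Real


-- reflection integrability lemma
lemma integrableOn_Iic_deriv_of_nonneg_my {g g' : ℝ → ℝ} {a l : ℝ}
    (hderiv : ∀ x, HasDerivAt g (g' x) x)
    (g'pos : ∀ x, 0 ≤ g' x)
    (hg : Filter.Tendsto g Filter.atBot (nhds l)) : IntegrableOn g' (Set.Iic a) := by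
  have h1 : ∀ x ∈ Set.Ici (-a), HasDerivAt (fun y => -g (-y)) (g' (-x)) x := by
    intro x _
    have := ((hderiv (-x)).comp x (hasDerivAt_neg x)).neg
    exact this.congr_deriv (by ring)
  have h2 : IntegrableOn (fun x => g' (-x)) (Set.Ioi (-a)) :=
    integrableOn_Ioi_deriv_of_nonneg' h1 (fun x _ => g'pos _)
      ((hg.comp tendsto_neg_atTop_atBot).neg)
  have hemb : MeasurableEmbedding fun x : ℝ => -x :=
    (Homeomorph.neg ℝ).isClosedEmbedding.measurableEmbedding
  have hmap : Measure.map (fun x : ℝ => -x) (volume.restrict (Set.Ioi (-a)))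
      = volume.restrict (Set.Iio a) := by
    have hp : (fun x : ℝ => -x) ⁻¹' (Set.Iio a) = Set.Ioi (-a) := by
      ext y; simp [neg_lt]
    rw [← hp, ← Measure.restrict_map measurable_neg measurableSet_Iio,
      Measure.map_neg_eq_self (volume : Measure ℝ)]
  rw [integrableOn_Iic_iff_integrableOn_Iio]
  unfold IntegrableOn
  rw [← hmap, hemb.integrable_map_iff]
  exact h2

section gumAux

variable {b k : ℝ}

lemma gumAux_deriv (hb : 0 < b) (k : ℝ) (z : ℝ) :
    HasDerivAt (fun z => Real.exp (-(k * Real.exp (-(z / b)))))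
      (k / b * (Real.exp (-(z / b)) * Real.exp (-(k * Real.exp (-(z / b)))))) z := by
  have h1 : HasDerivAt (fun z : ℝ => -(z / b)) (-(1 / b)) z := by
    exact ((hasDerivAt_id z).div_const b).neg
  have h2 := (Real.hasDerivAt_exp (-(z / b))).comp z h1
  have h3 := (h2.const_mul k).neg
  have h4 := (Real.hasDerivAt_exp (-(k * Real.exp (-(z / b))))).comp z h3
  refine h4.congr_deriv ?_
  ring

lemma gumAux_tendsto_top (hb : 0 < b) (k : ℝ) :
    Filter.Tendsto (fun z => Real.exp (-(k * Real.exp (-(z / b))))) Filter.atTop (nhds 1) := by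
  have h0 : Filter.Tendsto (fun z : ℝ => Real.exp (-(z / b))) Filter.atTop (nhds 0) :=
    Real.tendsto_exp_atBot.comp (tendsto_neg_atTop_atBot.comp (tendsto_id.atTop_div_const hb))
  have h1 : Filter.Tendsto (fun z : ℝ => -(k * Real.exp (-(z / b)))) Filter.atTop (nhds (-(k * 0))) :=
    (h0.const_mul k).neg
  have h2 := (Real.continuous_exp.tendsto (-(k * 0))).comp h1
  simpa [Function.comp_def] using h2

lemma gumAux_tendsto_bot (hb : 0 < b) (hk : 0 < k) :
    Filter.Tendsto (fun z => Real.exp (-(k * Real.exp (-(z / b))))) Filter.atBot (nhds 0) := by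
  have h0 : Filter.Tendsto (fun z : ℝ => Real.exp (-(z / b))) Filter.atBot Filter.atTop :=
    Real.tendsto_exp_atTop.comp (tendsto_neg_atBot_atTop.comp (tendsto_id.atBot_div_const hb))
  have h1 : Filter.Tendsto (fun z : ℝ => -(k * Real.exp (-(z / b)))) Filter.atBot Filter.atBot :=
    tendsto_neg_atTop_atBot.comp (h0.const_mul_atTop hk)
  exact Real.tendsto_exp_atBot.comp h1

lemma gumAux_integrable (hb : 0 < b) (hk : 0 < k) :
    Integrable (fun z => k / b * (Real.exp (-(z / b)) * Real.exp (-(k * Real.exp (-(z / b)))))) := by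
  have hnn : ∀ z : ℝ, 0 ≤ k / b * (Real.exp (-(z / b)) * Real.exp (-(k * Real.exp (-(z / b))))) := by
    intro z; positivity
  have h1 : IntegrableOn (fun z => k / b * (Real.exp (-(z / b)) * Real.exp (-(k * Real.exp (-(z / b)))))) (Set.Iic 0) :=
    integrableOn_Iic_deriv_of_nonneg_my (gumAux_deriv hb k) hnn (gumAux_tendsto_bot hb hk)
  have h2 : IntegrableOn (fun z => k / b * (Real.exp (-(z / b)) * Real.exp (-(k * Real.exp (-(z / b)))))) (Set.Ioi 0) :=
    integrableOn_Ioi_deriv_of_nonneg' (fun z _ => gumAux_deriv hb k z) (fun z _ => hnn z)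
      (gumAux_tendsto_top hb k)
  have h3 := h1.union h2
  rwa [Set.Iic_union_Ioi, integrableOn_univ] at h3

lemma gumAux_integral (hb : 0 < b) (hk : 0 < k) :
    ∫ z, k / b * (Real.exp (-(z / b)) * Real.exp (-(k * Real.exp (-(z / b))))) = 1 := by
  have := integral_of_hasDerivAt_of_tendsto (gumAux_deriv hb k) (gumAux_integrable hb hk)
    (gumAux_tendsto_bot hb hk) (gumAux_tendsto_top hb k)
  simpa using this

lemma gumAux_integral_Iic (hb : 0 < b) (hk : 0 < k) (t : ℝ) :
    ∫ z in Set.Iic t, k / b * (Real.exp (-(z / b)) * Real.exp (-(k * Real.exp (-(z / b)))))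
      = Real.exp (-(k * Real.exp (-(t / b)))) := by
  have := integral_Iic_of_hasDerivAt_of_tendsto' (a := t) (fun z _ => gumAux_deriv hb k z)
    ((gumAux_integrable hb hk).integrableOn) (gumAux_tendsto_bot hb hk)
  simpa using this

end gumAux

/-- Density of the Gumbel distribution `Gum(b)`. -/
noncomputable def gumPdf (b z : ℝ) : ℝ := (1 / b) * Real.exp (-(z / b + Real.exp (-(z / b))))

/-- The Gumbel distribution `Gum(b)` as a measure on `ℝ`. -/
noncomputable def gumMeasure (b : ℝ) : Measure ℝ :=
  volume.withDensity fun z => ENNReal.ofReal (gumPdf b z)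

lemma gumPdf_eq (b : ℝ) :
    gumPdf b = fun z => 1 / b * (Real.exp (-(z / b)) * Real.exp (-(1 * Real.exp (-(z / b))))) := by
  funext z
  unfold gumPdf
  rw [one_mul, neg_add, Real.exp_add]

lemma gumPdf_nonneg (b z : ℝ) (hb : 0 < b) : 0 ≤ gumPdf b z := by
  unfold gumPdf; positivity

lemma gumPdf_cont (b : ℝ) : Continuous (gumPdf b) := by
  unfold gumPdf; fun_prop

lemma gumMeasure_Iic {b : ℝ} (hb : 0 < b) (t : ℝ) :
    gumMeasure b (Set.Iic t) = ENNReal.ofReal (Real.exp (-(Real.exp (-(t / b))))) := by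
  rw [gumMeasure, withDensity_apply _ measurableSet_Iic]
  have hint : IntegrableOn (gumPdf b) (Set.Iic t) := by
    rw [gumPdf_eq]; exact (gumAux_integrable hb one_pos).integrableOn
  have hnn : 0 ≤ᵐ[volume.restrict (Set.Iic t)] gumPdf b :=
    Filter.Eventually.of_forall fun z => gumPdf_nonneg b z hb
  rw [← ofReal_integral_eq_lintegral_ofReal hint hnn]
  congr 1
  have : ∫ z in Set.Iic t, gumPdf b z
      = Real.exp (-(1 * Real.exp (-(t / b)))) := by
    simp only [gumPdf_eq]
    exact gumAux_integral_Iic hb one_pos t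
  rw [this, one_mul]

lemma gumMeasure_univ {b : ℝ} (hb : 0 < b) : gumMeasure b Set.univ = 1 := by
  rw [gumMeasure, withDensity_apply _ MeasurableSet.univ, Measure.restrict_univ]
  have hint : Integrable (gumPdf b) := by
    rw [gumPdf_eq]; exact gumAux_integrable hb one_pos
  have hnn : 0 ≤ᵐ[(volume : Measure ℝ)] gumPdf b :=
    Filter.Eventually.of_forall fun z => gumPdf_nonneg b z hb
  rw [← ofReal_integral_eq_lintegral_ofReal hint hnn]
  have : ∫ z, gumPdf b z = 1 := by
    simp only [gumPdf_eq]; exact gumAux_integral hb one_pos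
  simp [this]

/-- If `Z₁, Z₂` are independent `Gum(b)` random variables with `b > 0`, then
`Z₁ − Z₂` has the logistic distribution with scale `b`:
`Pr[Z₁ − Z₂ ≤ x] = 1/(1 + e^{−x/b})` for all `x ∈ ℝ`. -/
theorem gumbel_difference_is_logistic (b : ℝ) (hb : 0 < b) (x : ℝ) :
    ((gumMeasure b).prod (gumMeasure b)) {p : ℝ × ℝ | p.1 - p.2 ≤ x}
      = ENNReal.ofReal (1 / (1 + Real.exp (-x / b))) := by
  haveI : IsProbabilityMeasure (gumMeasure b) := ⟨gumMeasure_univ hb⟩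
  set c := Real.exp (-(x / b)) with hc
  have hcpos : 0 < c := Real.exp_pos _
  have h1c : 0 < 1 + c := by positivity
  have hmeas1 : MeasurableSet {p : ℝ × ℝ | p.1 - p.2 ≤ x} :=
    measurableSet_le (measurable_fst.sub measurable_snd) measurable_const
  have hmeas2 : MeasurableSet {p : ℝ × ℝ | p.2 - p.1 ≤ x} :=
    measurableSet_le (measurable_snd.sub measurable_fst) measurable_const
  have hswap : ((gumMeasure b).prod (gumMeasure b)) {p : ℝ × ℝ | p.1 - p.2 ≤ x}
      = ((gumMeasure b).prod (gumMeasure b)) {p : ℝ × ℝ | p.2 - p.1 ≤ x} := by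
    conv_lhs => rw [← Measure.prod_swap]
    rw [Measure.map_apply measurable_swap hmeas1]
    rfl
  rw [hswap, Measure.prod_apply hmeas2]
  have hslice : ∀ z : ℝ, (Prod.mk z ⁻¹' {p : ℝ × ℝ | p.2 - p.1 ≤ x}) = Set.Iic (x + z) := by
    intro z; ext w
    simp [sub_le_iff_le_add]
  have hstep1 : ∫⁻ z, gumMeasure b (Prod.mk z ⁻¹' {p : ℝ × ℝ | p.2 - p.1 ≤ x}) ∂(gumMeasure b)
      = ∫⁻ z, ENNReal.ofReal (Real.exp (-(Real.exp (-((x + z) / b))))) ∂(gumMeasure b) := by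
    refine lintegral_congr fun z => ?_
    rw [hslice z, gumMeasure_Iic hb]
  have hfm : Measurable fun z : ℝ => ENNReal.ofReal (gumPdf b z) :=
    ENNReal.measurable_ofReal.comp (gumPdf_cont b).measurable
  have hgm : Measurable fun z : ℝ => ENNReal.ofReal (Real.exp (-(Real.exp (-((x + z) / b))))) := by
    fun_prop
  rw [hstep1, gumMeasure, lintegral_withDensity_eq_lintegral_mul _ hfm hgm]
  have hstep2 : ∫⁻ z, ((fun z => ENNReal.ofReal (gumPdf b z)) *
        fun z => ENNReal.ofReal (Real.exp (-(Real.exp (-((x + z) / b)))))) z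
      = ∫⁻ z, ENNReal.ofReal (gumPdf b z * Real.exp (-(Real.exp (-((x + z) / b))))) := by
    refine lintegral_congr fun z => ?_
    simp only [Pi.mul_apply]
    rw [ENNReal.ofReal_mul (gumPdf_nonneg b z hb)]
  rw [hstep2]
  have key : (fun z => gumPdf b z * Real.exp (-(Real.exp (-((x + z) / b)))))
      = fun z => (1 / (1 + c)) *
          ((1 + c) / b * (Real.exp (-(z / b)) * Real.exp (-((1 + c) * Real.exp (-(z / b)))))) := by
    funext z
    have e1 : Real.exp (-((x + z) / b)) = c * Real.exp (-(z / b)) := by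
      rw [hc, ← Real.exp_add]; congr 1; rw [add_div]; ring
    have e2 : Real.exp (-((1 + c) * Real.exp (-(z / b))))
        = Real.exp (-(Real.exp (-(z / b)))) * Real.exp (-(c * Real.exp (-(z / b)))) := by
      rw [← Real.exp_add]; congr 1; ring
    rw [e1, e2]
    unfold gumPdf
    rw [neg_add, Real.exp_add]
    field_simp
  have hint : Integrable (fun z => gumPdf b z * Real.exp (-(Real.exp (-((x + z) / b))))) := by
    rw [key]
    exact (gumAux_integrable hb h1c).const_mul _
  have hnn : 0 ≤ᵐ[(volume : Measure ℝ)]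
      fun z => gumPdf b z * Real.exp (-(Real.exp (-((x + z) / b)))) :=
    Filter.Eventually.of_forall fun z =>
      mul_nonneg (gumPdf_nonneg b z hb) (Real.exp_nonneg _)
  rw [← ofReal_integral_eq_lintegral_ofReal hint hnn]
  have hval : ∫ z, gumPdf b z * Real.exp (-(Real.exp (-((x + z) / b)))) = 1 / (1 + c) := by
    rw [key, MeasureTheory.integral_const_mul, gumAux_integral hb h1c, mul_one]
  rw [hval, hc, neg_div]
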